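/- Let X be a real Banach space, f quasidifferentiable at x with quasidifferential [A, B], and K > 0. Then there exists w ∈ B with inf{‖v + w‖_{X*} : v ∈ A} > 1/K if and only if there exists h ∈ X with ‖h‖ = 1 and f'(x,h) < −1/K. Consequently, the validity of the first condition does not depend on the choice of the quasidifferential [A,B] of f at x. -/

import Mathlib

set_option synthInstance.maxHeartbeats 1000000
set_option maxHeartbeats 1000000
set_option linter.unusedVariables false

open Filter Topology Set Pointwise

/-- Dini directional differentiability of `f` at `x` with directional derivative `f'`. -/
def HasDiniDeriv {X : Type*} [NormedAddCommGroup X] [NormedSpace ℝ X]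
    (f : X → ℝ) (x : X) (f' : X → ℝ) : Prop :=
  ∀ h : X, Tendsto (fun t : ℝ => (f (x + t • h) - f x) / t) (𝓝[>] (0 : ℝ)) (𝓝 (f' h))

/-- A set of continuous linear functionals is weak* compact. -/
def WeakStarCompact {X : Type*} [NormedAddCommGroup X] [NormedSpace ℝ X]
    (A : Set (X →L[ℝ] ℝ)) : Prop :=
  IsCompact ((fun v : X →L[ℝ] ℝ => (StrongDual.toWeakDual v : WeakDual ℝ X)) '' A)

/-- `[A, B]` is a quasidifferential of `f` at `x`, with Dini directional derivative `f'`. -/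
def IsQuasidiff {X : Type*} [NormedAddCommGroup X] [NormedSpace ℝ X]
    (f : X → ℝ) (x : X) (f' : X → ℝ) (A B : Set (X →L[ℝ] ℝ)) : Prop :=
  A.Nonempty ∧ B.Nonempty ∧ Convex ℝ A ∧ Convex ℝ B ∧
    WeakStarCompact A ∧ WeakStarCompact B ∧ HasDiniDeriv f x f' ∧
    ∀ h : X, f' h = sSup ((fun v => v h) '' A) + sInf ((fun w => w h) '' B)


/-- Evaluation at `y` as a linear functional on the weak-star dual. -/
noncomputable def evalLM {X : Type*} [NormedAddCommGroup X] [NormedSpace ℝ X] (y : X) :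
    WeakDual ℝ X →ₗ[ℝ] ℝ where
  toFun u := u y
  map_add' u v := rfl
  map_smul' t u := rfl

/-- Every continuous linear functional on the weak-star dual is evaluation at a point. -/
lemma weakdual_functional_exists {X : Type*} [NormedAddCommGroup X] [NormedSpace ℝ X]
    (φ : WeakDual ℝ X →L[ℝ] ℝ) : ∃ h : X, ∀ u : WeakDual ℝ X, φ u = u h := by
  have hb := LinearMap.hasBasis_weakBilin (topDualPairing ℝ X)
  have h1 : φ ⁻¹' Metric.ball (0:ℝ) 1 ∈ 𝓝 (0 : WeakDual ℝ X) := by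
    have := φ.continuous.continuousAt (x := 0)
    have h0 : Metric.ball (0:ℝ) 1 ∈ 𝓝 (φ 0) := by
      rw [map_zero]; exact Metric.ball_mem_nhds _ one_pos
    exact this.preimage_mem_nhds h0
  obtain ⟨U, hU, hUsub⟩ := hb.mem_iff.mp h1
  obtain ⟨s, r, hr, hUeq⟩ := (SeminormFamily.basisSets_iff _).mp hU
  subst hUeq
  set p := (topDualPairing ℝ X).toSeminormFamily with hp
  have hker : ⨅ i : s, LinearMap.ker (evalLM (X := X) (i : X)) ≤
      LinearMap.ker (φ : WeakDual ℝ X →ₗ[ℝ] ℝ) := by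
    intro u hu
    simp only [Submodule.mem_iInf, LinearMap.mem_ker] at hu ⊢
    have hzero : ∀ y ∈ s, u y = 0 := fun y hy => hu ⟨y, hy⟩
    have hmem : ∀ t : ℝ, (t • u) ∈ (s.sup p).ball 0 r := by
      intro t
      apply (Seminorm.mem_ball_zero (p := s.sup p) (y := (t • u : WeakDual ℝ X))).mpr
      rcases s.eq_empty_or_nonempty with hs | hs
      · subst hs; exact hr
      · apply Seminorm.finset_sup_apply_lt hr
        intro y hy
        show ‖(t • u) y‖ < r
        have h3 : (t • u) y = t * u y := rfl
        rw [h3, hzero y hy, mul_zero, norm_zero]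
        exact hr
    have hsmall : ∀ t : ℝ, |t| * |φ u| < 1 := by
      intro t
      have := hUsub (hmem t)
      change φ (t • u) ∈ Metric.ball (0:ℝ) 1 at this
      simp only [mem_preimage, Metric.mem_ball, dist_zero_right, Real.norm_eq_abs] at this
      have heq : φ (t • u) = t * φ u := by rw [map_smul]; rfl
      rw [heq, abs_mul] at this
      exact this
    by_contra hne
    have habs : 0 < |φ u| := abs_pos.mpr hne
    have := hsmall (2 / |φ u|)
    rw [abs_div, abs_two, abs_abs, div_mul_cancel₀ _ (ne_of_gt habs)] at this
    norm_num at this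
  have hspan := mem_span_of_iInf_ker_le_ker (𝕜 := ℝ)
    (L := fun i : s => evalLM (X := X) (i : X)) (K := (φ : WeakDual ℝ X →ₗ[ℝ] ℝ)) hker
  obtain ⟨c, hc⟩ := (Submodule.mem_span_range_iff_exists_fun ℝ).mp hspan
  refine ⟨∑ i : s, c i • (i : X), fun u => ?_⟩
  have h2 := LinearMap.congr_fun hc u
  simp only [LinearMap.coe_sum, Finset.sum_apply, LinearMap.smul_apply, LinearMap.coe_coe] at h2
  have h3 : u (∑ i : s, c i • (i : X)) = ∑ i : s, c i • (evalLM (X := X) (i : X)) u := by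
    rw [map_sum]
    exact Finset.sum_congr rfl fun i _ => by rw [map_smul]; rfl
  rw [h3, h2]
  rfl



lemma weakstar_image_compact {X : Type*} [NormedAddCommGroup X] [NormedSpace ℝ X]
    {S : Set (X →L[ℝ] ℝ)} (hS : WeakStarCompact S) (h : X) :
    IsCompact ((fun v : X →L[ℝ] ℝ => v h) '' S) := by
  have heq : (fun v : X →L[ℝ] ℝ => v h) '' S
      = (fun u : WeakDual ℝ X => u h) ''
        ((fun v : X →L[ℝ] ℝ => (StrongDual.toWeakDual v : WeakDual ℝ X)) '' S) := by
    rw [Set.image_image]; rfl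
  rw [heq]
  exact hS.image (WeakDual.eval_continuous h)

noncomputable instance weakDualLCS {X : Type*} [NormedAddCommGroup X] [NormedSpace ℝ X] :
    LocallyConvexSpace ℝ (WeakDual ℝ X) :=
  inferInstanceAs (LocallyConvexSpace ℝ (WeakBilin (topDualPairing ℝ X)))

lemma key_iff {X : Type*} [NormedAddCommGroup X] [NormedSpace ℝ X]
    (K : ℝ) (hK : 0 < K) (f' : X → ℝ) (A B : Set (X →L[ℝ] ℝ))
    (hA : A.Nonempty) (hB : B.Nonempty) (hAconv : Convex ℝ A)
    (hAc : WeakStarCompact A) (hBc : WeakStarCompact B)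
    (hf' : ∀ h : X, f' h = sSup ((fun v => v h) '' A) + sInf ((fun w => w h) '' B)) :
    (∃ w ∈ B, 1 / K < sInf ((fun v => ‖v + w‖) '' A)) ↔
      ∃ h : X, ‖h‖ = 1 ∧ f' h < -(1 / K) := by
  have hK' : (0:ℝ) < 1 / K := by positivity
  constructor
  · rintro ⟨w, hw, hlt⟩
    set d := sInf ((fun v => ‖v + w‖) '' A) with hd
    have hled : ∀ v ∈ A, d ≤ ‖v + w‖ := by
      intro v hv
      exact csInf_le ⟨0, by rintro _ ⟨v', _, rfl⟩; positivity⟩ ⟨v, hv, rfl⟩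
    obtain ⟨r, hr1, hr2⟩ := exists_between hlt
    have hr0 : (0:ℝ) < r := lt_trans hK' hr1
    set tw : WeakDual ℝ X := StrongDual.toWeakDual w with htw
    set C : Set (WeakDual ℝ X) :=
      (fun v : X →L[ℝ] ℝ => (StrongDual.toWeakDual (v + w) : WeakDual ℝ X)) '' A with hC
    have hCeq : C = (fun u : WeakDual ℝ X => u + tw) ''
        ((fun v : X →L[ℝ] ℝ => (StrongDual.toWeakDual v : WeakDual ℝ X)) '' A) := by
      rw [Set.image_image]; rfl
    have hCc : IsCompact C := by
      rw [hCeq]; exact hAc.image (continuous_add_right _)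
    have hCconv : Convex ℝ C := by
      rw [hCeq]
      have h1 : Convex ℝ ((fun v : X →L[ℝ] ℝ =>
          (StrongDual.toWeakDual v : WeakDual ℝ X)) '' A) :=
        hAconv.linear_image (StrongDual.toWeakDual.toLinearMap)
      have h2 := h1.translate tw
      have h3 : ((fun x => tw + x) : WeakDual ℝ X → WeakDual ℝ X) = fun x => x + tw := by
        funext x; exact add_comm tw x
      rwa [h3] at h2
    set Bl : Set (WeakDual ℝ X) := WeakDual.toStrongDual ⁻¹' Metric.closedBall 0 r with hBl
    have hBlclosed : IsClosed Bl := WeakDual.isClosed_closedBall 0 r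
    have hBlconv : Convex ℝ Bl :=
      (convex_closedBall (0 : StrongDual ℝ X) r).linear_preimage
        (WeakDual.toStrongDual.toLinearMap)
    have hdisj : Disjoint C Bl := by
      rw [Set.disjoint_left]
      rintro a ⟨v, hv, rfl⟩ hmem
      simp only [hBl, Set.mem_preimage, Metric.mem_closedBall, dist_zero_right] at hmem
      have hle : ‖v + w‖ ≤ r := hmem
      exact absurd (lt_of_lt_of_le hr2 (hled v hv)) (not_lt.mpr hle)
    obtain ⟨φ, uu, vv, h1, h2, h3⟩ :=
      geometric_hahn_banach_compact_closed hCconv hCc hBlconv hBlclosed hdisj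
    obtain ⟨h₀, hφ⟩ := weakdual_functional_exists φ
    have h₀ne : h₀ ≠ 0 := by
      rintro rfl
      have hz : (StrongDual.toWeakDual (0 : X →L[ℝ] ℝ) : WeakDual ℝ X) ∈ Bl := by
        simp [hBl, hr0.le]
      have hz2 := h3 _ hz
      rw [hφ] at hz2
      obtain ⟨v, hv⟩ := hA
      have h4 := h1 _ ⟨v, hv, rfl⟩
      rw [hφ] at h4
      simp only [map_zero] at hz2 h4
      linarith
    obtain ⟨g, hg1, hg2⟩ := exists_dual_vector ℝ h₀ (norm_ne_zero_iff.mpr h₀ne)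
    have hkey : vv < -(r * ‖h₀‖) := by
      have hmem : (StrongDual.toWeakDual (-(r • g)) : WeakDual ℝ X) ∈ Bl := by
        have hn : ‖(-(r • g) : X →L[ℝ] ℝ)‖ ≤ r := by
          apply ContinuousLinearMap.opNorm_le_bound _ hr0.le
          intro y
          have he : (-(r • g)) y = -(r * g y) := by simp
          rw [he, norm_neg]
          have hgy : ‖g y‖ ≤ ‖y‖ := by
            have := g.le_opNorm y; rwa [hg1, one_mul] at this
          have : ‖r * g y‖ = |r| * ‖g y‖ := by
            simp [Real.norm_eq_abs, abs_mul]
          rw [this, abs_of_pos hr0]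
          exact mul_le_mul_of_nonneg_left hgy hr0.le
        simpa [hBl] using hn
      have h5 := h3 _ hmem
      rw [hφ] at h5
      have h6 : (StrongDual.toWeakDual (-(r • g)) : WeakDual ℝ X) h₀ = -(r * ‖h₀‖) := by
        have h7 : (-(r • g)) h₀ = -(r * g h₀) := by simp
        rw [show ((StrongDual.toWeakDual (-(r • g)) : WeakDual ℝ X) h₀ : ℝ)
          = (-(r • g)) h₀ from rfl, h7, hg2]
        norm_num
      rwa [h6] at h5
    have hAbound : ∀ v ∈ A, (v + w) h₀ < -(r * ‖h₀‖) := by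
      intro v hv
      have h4 := h1 _ ⟨v, hv, rfl⟩
      rw [hφ] at h4
      have h5 : ((v + w) h₀ : ℝ) < uu := h4
      linarith
    have hno : (0:ℝ) < ‖h₀‖ := norm_pos_iff.mpr h₀ne
    set h : X := ‖h₀‖⁻¹ • h₀ with hh
    have hhn : ‖h‖ = 1 := by
      rw [hh, norm_smul, norm_inv, norm_norm, inv_mul_cancel₀ hno.ne']
    refine ⟨h, hhn, ?_⟩
    have hvh : ∀ v ∈ A, v h + w h < -r := by
      intro v hv
      have h5 : (v + w) h = ‖h₀‖⁻¹ * ((v + w) h₀) := by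
        rw [hh, map_smul, smul_eq_mul]
      have h6 : ‖h₀‖⁻¹ * ((v + w) h₀) < ‖h₀‖⁻¹ * (-(r * ‖h₀‖)) :=
        mul_lt_mul_of_pos_left (hAbound v hv) (inv_pos.mpr hno)
      have h7 : ‖h₀‖⁻¹ * (-(r * ‖h₀‖)) = -r := by field_simp
      have h8 : (v + w) h = v h + w h := rfl
      rw [h8] at h5
      rw [h7] at h6
      linarith
    rw [hf' h]
    have hsup : sSup ((fun v => v h) '' A) ≤ -r - w h := by
      apply csSup_le (hA.image _)
      rintro _ ⟨v, hv, rfl⟩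
      linarith [hvh v hv]
    have hinf : sInf ((fun w' => w' h) '' B) ≤ w h :=
      csInf_le (weakstar_image_compact hBc h).bddBelow ⟨w, hw, rfl⟩
    linarith
  · rintro ⟨h, hh1, hh2⟩
    have hSB := weakstar_image_compact hBc h
    have hSBne : ((fun w' : X →L[ℝ] ℝ => w' h) '' B).Nonempty := hB.image _
    obtain ⟨w₀, hw₀, hw₀eq⟩ := hSB.sInf_mem hSBne
    refine ⟨w₀, hw₀, ?_⟩
    have hbd : ∀ v ∈ A, -(f' h) ≤ ‖v + w₀‖ := by
      intro v hv
      have h1 : v h ≤ sSup ((fun v : X →L[ℝ] ℝ => v h) '' A) :=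
        le_csSup (weakstar_image_compact hAc h).bddAbove ⟨v, hv, rfl⟩
      have h3 : v h + w₀ h ≤ f' h := by
        rw [hf' h, ← hw₀eq]; linarith
      have h4 : |(v + w₀) h| ≤ ‖v + w₀‖ := by
        have := (v + w₀).le_opNorm h
        rwa [hh1, mul_one] at this
      have h5 : (v + w₀) h = v h + w₀ h := rfl
      calc -(f' h) ≤ -(v h + w₀ h) := by linarith
        _ = -((v + w₀) h) := by rw [h5]
        _ ≤ |(v + w₀) h| := neg_le_abs _
        _ ≤ ‖v + w₀‖ := h4
    have hKf : 1 / K < -(f' h) := by linarith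
    calc 1 / K < -(f' h) := hKf
      _ ≤ sInf ((fun v => ‖v + w₀‖) '' A) :=
        le_csInf (hA.image _) (by rintro _ ⟨v, hv, rfl⟩; exact hbd v hv)

/-- the condition `∃ w ∈ B, inf{‖v + w‖ : v ∈ A} > 1/K` is equivalent to the
existence of a unit vector `h` with `f'(x,h) < -1/K`; consequently it is independent of the
choice of the quasidifferential of `f` at `x`. -/
theorem quasidiff_slope_condition_iff
    {X : Type*} [NormedAddCommGroup X] [NormedSpace ℝ X] [CompleteSpace X]
    (f : X → ℝ) (x : X) (K : ℝ) (hK : 0 < K)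
    (f' : X → ℝ) (A B : Set (X →L[ℝ] ℝ)) (hq : IsQuasidiff f x f' A B)
    (f'' : X → ℝ) (A' B' : Set (X →L[ℝ] ℝ)) (hq' : IsQuasidiff f x f'' A' B') :
    ((∃ w ∈ B, 1 / K < sInf ((fun v => ‖v + w‖) '' A)) ↔
      (∃ h : X, ‖h‖ = 1 ∧ f' h < -(1 / K))) ∧
    ((∃ w ∈ B, 1 / K < sInf ((fun v => ‖v + w‖) '' A)) ↔
      (∃ w ∈ B', 1 / K < sInf ((fun v => ‖v + w‖) '' A'))) := by
  obtain ⟨hA, hB, hAconv, _, hAc, hBc, hdini, hform⟩ := hq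
  obtain ⟨hA', hB', hAconv', _, hAc', hBc', hdini', hform'⟩ := hq'
  have heq : ∀ h : X, f' h = f'' h := fun h =>
    tendsto_nhds_unique (hdini h) (hdini' h)
  have k1 := key_iff K hK f' A B hA hB hAconv hAc hBc hform
  have k2 := key_iff K hK f'' A' B' hA' hB' hAconv' hAc' hBc' hform'
  refine ⟨k1, k1.trans (Iff.trans ?_ k2.symm)⟩
  constructor <;> rintro ⟨h, h1, h2⟩
  · exact ⟨h, h1, heq h ▸ h2⟩
  · exact ⟨h, h1, (heq h).symm ▸ h2⟩
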